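/- Let Λ = Λ_E be the (k+1)-graph associated to a Bratteli diagram of finite covering maps between row-finite locally convex k-graphs (Λ_v)_{v ∈ E^0}, and for each v ∈ E^0 let g_v : Λ_v^0 → [0,∞) be a graph trace on Λ_v. Define g : Λ^0 → [0,∞) by g(ι_v(u)) = g_v(u) for v ∈ E^0 and u ∈ Λ_v^0. Then g is a graph trace on Λ if and only if the collection (g_v) is compatible, i.e. g_v(u) = Σ_{e ∈ vE^1} Σ_{w ∈ Λ_{s(e)}^0, p_e(w) = u} g_{s(e)}(w) for all v ∈ E^0 and u ∈ Λ_v^0. -/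

import Mathlib

open scoped BigOperators NNReal ENNReal

/-- A `k`-graph: a countable small category presented on its set of morphisms,
with a range map, a source map, a (total, junk-valued on non-composable pairs)
composition, and a degree functor into `ℕ^k` satisfying the factorisation
property. -/
structure KGraph (k : ℕ) where
  M : Type
  countableM : Countable M
  nonemptyM : Nonempty M
  src : M → M
  rng : M → M
  comp : M → M → M
  deg : M → Fin k → ℕ
  src_src : ∀ x, src (src x) = src x
  rng_src : ∀ x, rng (src x) = src x
  src_rng : ∀ x, src (rng x) = rng x
  rng_rng : ∀ x, rng (rng x) = rng x
  comp_id : ∀ x, comp x (src x) = x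
  id_comp : ∀ x, comp (rng x) x = x
  src_comp : ∀ x y, src x = rng y → src (comp x y) = src y
  rng_comp : ∀ x y, src x = rng y → rng (comp x y) = rng x
  comp_assoc : ∀ x y z, src x = rng y → src y = rng z →
    comp (comp x y) z = comp x (comp y z)
  deg_src : ∀ x, deg (src x) = 0
  deg_rng : ∀ x, deg (rng x) = 0
  deg_comp : ∀ x y, src x = rng y → deg (comp x y) = deg x + deg y
  factor : ∀ (x : M) (m n : Fin k → ℕ), deg x = m + n →
    ∃! p : M × M, src p.1 = rng p.2 ∧ comp p.1 p.2 = x ∧ deg p.1 = m ∧ deg p.2 = n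

namespace KGraph

variable {k : ℕ} (Λ : KGraph k)

/-- The vertices (identity morphisms) of a `k`-graph. -/
def IsVertex (v : Λ.M) : Prop := Λ.rng v = v

/-- `Composable x y` means the composition `x ∘ y` (i.e. the path `xy`) is defined. -/
def Composable (x y : Λ.M) : Prop := Λ.src x = Λ.rng y

/-- The type of vertices of `Λ`. -/
def Vtx := {v : Λ.M // Λ.IsVertex v}

theorem isVertex_src (x : Λ.M) : Λ.IsVertex (Λ.src x) := Λ.rng_src x

theorem isVertex_rng (x : Λ.M) : Λ.IsVertex (Λ.rng x) := Λ.rng_rng x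

/-- The source of a morphism, as a vertex. -/
def srcV (x : Λ.M) : Λ.Vtx := ⟨Λ.src x, Λ.isVertex_src x⟩

/-- The set `vΛ^{≤ n}`. -/
def leSet (v : Λ.M) (n : Fin k → ℕ) : Set Λ.M :=
  {x | Λ.rng x = v ∧ Λ.deg x ≤ n ∧
    ∀ i : Fin k, Λ.deg x + Pi.single i 1 ≤ n →
      ¬∃ y, Λ.rng y = Λ.src x ∧ Λ.deg y = Pi.single i 1}

/-- A `k`-graph is row-finite if `vΛ^n` is finite for every vertex `v` and `n ∈ ℕ^k`. -/
def RowFinite : Prop :=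
  ∀ (v : Λ.M) (n : Fin k → ℕ), Λ.IsVertex v → {x | Λ.rng x = v ∧ Λ.deg x = n}.Finite

/-- A `k`-graph is locally convex if whenever `i < j`, `e ∈ Λ^{e_i}`, `f ∈ Λ^{e_j}` and
`r e = r f`, both `e` and `f` extend to paths of degree `e_i + e_j`. -/
def LocallyConvex : Prop :=
  ∀ (i j : Fin k), i < j → ∀ e f : Λ.M,
    Λ.deg e = Pi.single i 1 → Λ.deg f = Pi.single j 1 → Λ.rng e = Λ.rng f →
    (∃ e', Λ.Composable e e' ∧ Λ.deg e' = Pi.single j 1) ∧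
    (∃ f', Λ.Composable f f' ∧ Λ.deg f' = Pi.single i 1)

/-- `Λ^{min}(x,y)`: the pairs `(α, β)` with `xα = yβ` of degree `d x ⊔ d y`. -/
def MinExt (x y : Λ.M) : Set (Λ.M × Λ.M) :=
  {p | Λ.Composable x p.1 ∧ Λ.Composable y p.2 ∧
    Λ.comp x p.1 = Λ.comp y p.2 ∧ Λ.deg (Λ.comp x p.1) = Λ.deg x ⊔ Λ.deg y}

/-- A subset `E ⊆ vΛ` is exhaustive if every `x ∈ vΛ` has a minimal common extension
with some element of `E`. -/
def Exhaustive (v : Λ.M) (E : Set Λ.M) : Prop :=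
  ∀ x, Λ.rng x = v → ∃ μ ∈ E, (Λ.MinExt x μ).Nonempty

/-- A graph trace on `Λ`. -/
def IsGraphTrace (g : Λ.Vtx → ℝ≥0) : Prop :=
  ∀ (v : Λ.Vtx) (n : Fin k → ℕ), g v = ∑ᶠ x ∈ Λ.leSet v.1 n, g (Λ.srcV x)

/-- A `𝕋`-valued `2`-cocycle on `Λ`, presented as a `ℂ`-valued function that is
unimodular on composable pairs. -/
def IsTCocycle (c : Λ.M → Λ.M → ℂ) : Prop :=
  (∀ x y, Λ.Composable x y → ‖c x y‖ = 1) ∧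
  (∀ x y, Λ.IsVertex x ∨ Λ.IsVertex y → c x y = 1) ∧
  (∀ x y z, Λ.Composable x y → Λ.Composable y z →
    c x y * c (Λ.comp x y) z = c y z * c x (Λ.comp y z))

/-- A Cuntz–Krieger `(Λ, c)`-family in a `C*`-algebra `B`: relations (CK1)–(CK4). -/
def IsCKFamily {B : Type*} [NonUnitalCStarAlgebra B] [NormedSpace ℂ B]
    (c : Λ.M → Λ.M → ℂ) (s : Λ.M → B) : Prop :=
  (∀ v, Λ.IsVertex v → star (s v) = s v ∧ s v * s v = s v) ∧
  (∀ v w, Λ.IsVertex v → Λ.IsVertex w → v ≠ w → s v * s w = 0) ∧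
  (∀ x y, Λ.Composable x y → s x * s y = c x y • s (Λ.comp x y)) ∧
  (∀ x, star (s x) * s x = s (Λ.src x)) ∧
  (∀ (v : Λ.M) (n : Fin k → ℕ), Λ.IsVertex v →
    s v = ∑ᶠ x ∈ Λ.leSet v n, s x * star (s x))

end KGraph
attribute [local instance] Classical.propDecidable

namespace KGraph

variable {k : ℕ}

/-- An `A`-valued (categorical) `2`-cocycle on a `k`-graph, encoded as a total
function that vanishes on non-composable pairs and on pairs involving an
identity morphism, and satisfies the cocycle identity on composable triples. -/
def IsCocycle2 (Λ : KGraph k) {A : Type*} [AddCommGroup A] (c : Λ.M → Λ.M → A) : Prop :=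
  (∀ x y, ¬Λ.Composable x y → c x y = 0) ∧
  (∀ x y, Λ.IsVertex x ∨ Λ.IsVertex y → c x y = 0) ∧
  (∀ x y z, Λ.Composable x y → Λ.Composable y z →
    c x y + c (Λ.comp x y) z = c y z + c x (Λ.comp y z))

/-- The group `Z²(Λ, A)` of `A`-valued `2`-cocycles on `Λ`. -/
def Z2 (Λ : KGraph k) (A : Type*) [AddCommGroup A] : AddSubgroup (Λ.M → Λ.M → A) where
  carrier := {c | Λ.IsCocycle2 c}
  zero_mem' := by
    refine ⟨fun _ _ _ => rfl, fun _ _ _ => rfl, fun _ _ _ _ _ => rfl⟩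
  add_mem' := by
    rintro c d ⟨hc1, hc2, hc3⟩ ⟨hd1, hd2, hd3⟩
    refine ⟨fun x y h => ?_, fun x y h => ?_, fun x y z h1 h2 => ?_⟩
    · simp [hc1 x y h, hd1 x y h]
    · simp [hc2 x y h, hd2 x y h]
    · simp only [Pi.add_apply]
      rw [add_add_add_comm, hc3 x y z h1 h2, hd3 x y z h1 h2, add_add_add_comm]
  neg_mem' := by
    rintro c ⟨hc1, hc2, hc3⟩
    refine ⟨fun x y h => ?_, fun x y h => ?_, fun x y z h1 h2 => ?_⟩
    · simp [hc1 x y h]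
    · simp [hc2 x y h]
    · simp only [Pi.neg_apply]
      rw [← neg_add, ← neg_add, hc3 x y z h1 h2]

/-- A `1`-cochain: a function on morphisms vanishing on the identity morphisms. -/
def IsCochain1 (Λ : KGraph k) {A : Type*} [AddCommGroup A] (b : Λ.M → A) : Prop :=
  ∀ v, Λ.IsVertex v → b v = 0

/-- The coboundary `δ¹ b` of a `1`-cochain `b`. -/
noncomputable def delta1 (Λ : KGraph k) {A : Type*} [AddCommGroup A] (b : Λ.M → A) :
    Λ.M → Λ.M → A :=
  fun x y => if Λ.Composable x y then b x + b y - b (Λ.comp x y) else 0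

/-- The group `B²(Λ, A)` of `A`-valued `2`-coboundaries on `Λ`. -/
noncomputable def B2 (Λ : KGraph k) (A : Type*) [AddCommGroup A] :
    AddSubgroup (Λ.M → Λ.M → A) where
  carrier := {c | ∃ b, Λ.IsCochain1 b ∧ c = Λ.delta1 b}
  zero_mem' := ⟨0, fun _ _ => rfl, by
    funext x y
    simp [delta1]⟩
  add_mem' := by
    rintro c d ⟨b, hb, rfl⟩ ⟨b', hb', rfl⟩
    refine ⟨b + b', fun v hv => by simp [hb v hv, hb' v hv], ?_⟩
    funext x y
    simp only [Pi.add_apply, delta1]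
    split <;> [abel; simp]
  neg_mem' := by
    rintro c ⟨b, hb, rfl⟩
    refine ⟨-b, fun v hv => by simp [hb v hv], ?_⟩
    funext x y
    simp only [Pi.neg_apply, delta1]
    split <;> [abel; simp]

/-- The second (categorical) cohomology group `H²(Λ, A) = Z²(Λ,A)/B²(Λ,A)`. -/
noncomputable def H2 (Λ : KGraph k) (A : Type*) [AddCommGroup A] :=
  Z2 Λ A ⧸ (B2 Λ A).addSubgroupOf (Z2 Λ A)

noncomputable instance (Λ : KGraph k) (A : Type*) [AddCommGroup A] :
    AddCommGroup (H2 Λ A) := by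
  unfold H2; infer_instance

/-- A covering of `k`-graphs: a surjective degree-preserving functor that restricts to
bijections `Γv → Λ p(v)` and `vΓ → p(v)Λ` on every vertex `v`. -/
def IsKGraphCovering (Γ Λ : KGraph k) (p : Γ.M → Λ.M) : Prop :=
  Function.Surjective p ∧
  (∀ x, Λ.src (p x) = p (Γ.src x)) ∧
  (∀ x, Λ.rng (p x) = p (Γ.rng x)) ∧
  (∀ x, Λ.deg (p x) = Γ.deg x) ∧
  (∀ x y, Γ.Composable x y → p (Γ.comp x y) = Λ.comp (p x) (p y)) ∧
  (∀ v, Γ.IsVertex v → Set.BijOn p {x | Γ.src x = v} {y | Λ.src y = p v}) ∧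
  (∀ v, Γ.IsVertex v → Set.BijOn p {x | Γ.rng x = v} {y | Λ.rng y = p v})

end KGraph

open KGraph

/-- The `(k+1)`-graph `Λ = lim (Λ_n, p_n)` associated to a covering sequence of
`k`-graphs, together with all its defining data: `L n` is the `k`-graph `Λ_{n+1}`
(so `L 0 = Λ₁`), `p n : Λ_{n+2} → Λ_{n+1}` are the coverings, `Lam` is the limit
`(k+1)`-graph, `ι n : Λ_{n+1} → Λ` are the injective functors, and `edge` is the
bijection of `⨆_{n ≥ 2} Λ_n^0` onto `Λ^{e_{k+1}}`, subject to the characterising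
properties (1)–(5). -/
structure CovSeqLimit (k : ℕ) where
  L : ℕ → KGraph k
  p : ∀ n, (L (n + 1)).M → (L n).M
  p_cov : ∀ n, IsKGraphCovering (L (n + 1)) (L n) (p n)
  Lam : KGraph (k + 1)
  ι : ∀ n, (L n).M → Lam.M
  ι_inj : ∀ n, Function.Injective (ι n)
  ι_src : ∀ n x, Lam.src (ι n x) = ι n ((L n).src x)
  ι_rng : ∀ n x, Lam.rng (ι n x) = ι n ((L n).rng x)
  ι_comp : ∀ n x y, (L n).Composable x y →
    Lam.comp (ι n x) (ι n y) = ι n ((L n).comp x y)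
  ι_deg : ∀ n x, Lam.deg (ι n x) = Fin.snoc ((L n).deg x) 0
  ι_disjoint : ∀ m n x y, ι m x = ι n y → m = n
  ι_union : ∀ z : Lam.M, Lam.deg z (Fin.last k) = 0 → ∃ n x, ι n x = z
  edge : (Σ n : ℕ, (L (n + 1)).M) → Lam.M
  edge_deg : ∀ q : Σ n, (L (n + 1)).M, (L (q.1 + 1)).IsVertex q.2 →
    Lam.deg (edge q) = Fin.snoc (fun _ : Fin k => 0) 1
  edge_injOn : Set.InjOn edge {q | (L (q.1 + 1)).IsVertex q.2}
  edge_surj : ∀ z : Lam.M, Lam.deg z = Fin.snoc (fun _ : Fin k => 0) 1 →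
    ∃ q, (L (q.1 + 1)).IsVertex q.2 ∧ edge q = z
  edge_src : ∀ (n) (v : (L (n + 1)).M), (L (n + 1)).IsVertex v →
    Lam.src (edge ⟨n, v⟩) = ι (n + 1) v
  edge_rng : ∀ (n) (v : (L (n + 1)).M), (L (n + 1)).IsVertex v →
    Lam.rng (edge ⟨n, v⟩) = ι n (p n v)
  edge_comm : ∀ (n) (x : (L (n + 1)).M),
    Lam.comp (edge ⟨n, (L (n + 1)).rng x⟩) (ι (n + 1) x) =
      Lam.comp (ι n (p n x)) (edge ⟨n, (L (n + 1)).src x⟩)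

namespace CovSeqLimit

variable {k : ℕ} (C : CovSeqLimit k)

/-- The iterated covering maps `p_{1,n} : Λ_n → Λ_1`. -/
def pIter : ∀ n, (C.L n).M → (C.L 0).M
  | 0 => id
  | n + 1 => pIter n ∘ C.p n

/-- A degree `d ∈ ℕ^{k+1}` lies in `ℕ e_{k+1}` iff its first `k` coordinates vanish. -/
def OnlyLast {k : ℕ} (d : Fin (k + 1) → ℕ) : Prop :=
  ∀ i : Fin k, d i.castSucc = 0

/-- The hypothesis that `ξ` assigns to each vertex `v` of `Λ` the path
`ξ_v ∈ Λ_1^0 Λ^{ℕ e_{k+1}} v`. -/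
def IsXi (ξ : C.Lam.M → C.Lam.M) : Prop :=
  ∀ v, C.Lam.IsVertex v → C.Lam.src (ξ v) = v ∧ OnlyLast (C.Lam.deg (ξ v)) ∧
    ∃ w, (C.L 0).IsVertex w ∧ C.Lam.rng (ξ v) = C.ι 0 w

/-- The hypothesis that `π : Λ → Λ₁` is the projection determined by the unique
factorisation `ξ_{r λ} λ = π(λ) β` with `π(λ) ∈ Λ₁` and `β ∈ Λ^{ℕ e_{k+1}}`. -/
def IsProjOnto (ξ : C.Lam.M → C.Lam.M) (π : C.Lam.M → (C.L 0).M) : Prop :=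
  ∀ x, ∃ β, OnlyLast (C.Lam.deg β) ∧ C.Lam.Composable (C.ι 0 (π x)) β ∧
    C.Lam.comp (ξ (C.Lam.rng x)) x = C.Lam.comp (C.ι 0 (π x)) β

/-- The map `π_* : Z²(Λ₁, A) → Z²(Λ, A)`, `π_* c (λ, μ) = c(π λ, π μ)`. -/
noncomputable def pfwd {A : Type*} [AddCommGroup A] (π : C.Lam.M → (C.L 0).M)
    (c : (C.L 0).M → (C.L 0).M → A) : C.Lam.M → C.Lam.M → A :=
  fun x y => if C.Lam.Composable x y then c (π x) (π y) else 0

/-- The restriction map `Z²(Λ, A) → Z²(Λ₁, A)`, `c ↦ c|_{Λ₁}`. -/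
def res {A : Type*} [AddCommGroup A] (c : C.Lam.M → C.Lam.M → A) :
    (C.L 0).M → (C.L 0).M → A :=
  fun x y => c (C.ι 0 x) (C.ι 0 y)

end CovSeqLimit
/-- A Bratteli diagram: a directed graph whose vertices are partitioned into finite
nonempty levels (level `n` here corresponds to `E_{n+1}^0` in the paper), each edge
pointing from a vertex at level `n+1` (its source) to one at level `n` (its range),
such that every vertex receives an edge and every vertex not at level `0` emits one. -/
structure BratteliDiagram where
  V : Type
  Edge : Type
  esrc : Edge → V
  erng : Edge → V
  level : V → ℕ
  level_src : ∀ e, level (esrc e) = level (erng e) + 1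
  level_finite : ∀ n, {v | level v = n}.Finite
  level_nonempty : ∀ n, ∃ v, level v = n
  rcv : ∀ v, ∃ e, erng e = v
  emit : ∀ v, level v ≠ 0 → ∃ e, esrc e = v

namespace BratteliDiagram

/-- A Bratteli diagram is singly connected if there is at most one edge between any
two vertices. -/
def SinglyConnected (E : BratteliDiagram) : Prop :=
  ∀ e f : E.Edge, E.erng e = E.erng f → E.esrc e = E.esrc f → e = f

/-- A graph trace on a Bratteli diagram. -/
def IsTrace (E : BratteliDiagram) (h : E.V → ℝ≥0) : Prop :=
  ∀ v, h v = ∑ᶠ e ∈ {e | E.erng e = v}, h (E.esrc e)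

/-- `HasPath E n v u`: there is a path of length `n` in `E` with range `v` and
source `u`. -/
def HasPath (E : BratteliDiagram) : ℕ → E.V → E.V → Prop
  | 0, v, u => v = u
  | n + 1, v, u => ∃ e, E.erng e = v ∧ HasPath E n (E.esrc e) u

/-- A Bratteli diagram is cofinal if for all `v, v'` there exists `n` such that the
source of every path of length `n` with range `v'` is connected to `v`. -/
def Cofinal (E : BratteliDiagram) : Prop :=
  ∀ v v' : E.V, ∃ n : ℕ, ∀ u : E.V, E.HasPath n v' u → ∃ m : ℕ, E.HasPath m v u

end BratteliDiagram

open KGraph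

/-- The `(k+1)`-graph `Λ_E` associated to a Bratteli diagram `E` of covering maps
`p_f : Λ_{s(f)} → Λ_{r(f)}` between `k`-graphs `(Λ_v)_{v ∈ E^0}`, together with its
defining data: injective functors `ι_v : Λ_v → Λ_E` and a bijection
`e : ⨆_{v ∉ E_1^0} Λ_v^0 × E^1 v → Λ_E^{e_{k+1}}` satisfying properties (1)–(5). -/
structure BCSLimit {k : ℕ} (E : BratteliDiagram) (Λv : E.V → KGraph k)
    (pe : ∀ f : E.Edge, (Λv (E.esrc f)).M → (Λv (E.erng f)).M) where
  Lam : KGraph (k + 1)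
  ι : ∀ v, (Λv v).M → Lam.M
  ι_inj : ∀ v, Function.Injective (ι v)
  ι_src : ∀ v x, Lam.src (ι v x) = ι v ((Λv v).src x)
  ι_rng : ∀ v x, Lam.rng (ι v x) = ι v ((Λv v).rng x)
  ι_comp : ∀ v x y, (Λv v).Composable x y →
    Lam.comp (ι v x) (ι v y) = ι v ((Λv v).comp x y)
  ι_deg : ∀ v x, Lam.deg (ι v x) = Fin.snoc ((Λv v).deg x) 0
  ι_disjoint : ∀ v u x y, ι v x = ι u y → v = u
  ι_union : ∀ z : Lam.M, Lam.deg z (Fin.last k) = 0 → ∃ v x, ι v x = z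
  edge : (Σ f : E.Edge, (Λv (E.esrc f)).M) → Lam.M
  edge_deg : ∀ q : Σ f : E.Edge, (Λv (E.esrc f)).M, (Λv (E.esrc q.1)).IsVertex q.2 →
    Lam.deg (edge q) = Fin.snoc (fun _ : Fin k => 0) 1
  edge_injOn : Set.InjOn edge {q | (Λv (E.esrc q.1)).IsVertex q.2}
  edge_surj : ∀ z : Lam.M, Lam.deg z = Fin.snoc (fun _ : Fin k => 0) 1 →
    ∃ q, (Λv (E.esrc q.1)).IsVertex q.2 ∧ edge q = z
  edge_src : ∀ (f : E.Edge) (x : (Λv (E.esrc f)).M), (Λv (E.esrc f)).IsVertex x →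
    Lam.src (edge ⟨f, x⟩) = ι (E.esrc f) x
  edge_rng : ∀ (f : E.Edge) (x : (Λv (E.esrc f)).M), (Λv (E.esrc f)).IsVertex x →
    Lam.rng (edge ⟨f, x⟩) = ι (E.erng f) (pe f x)
  edge_comm : ∀ (f : E.Edge) (x : (Λv (E.esrc f)).M),
    Lam.comp (edge ⟨f, (Λv (E.esrc f)).rng x⟩) (ι (E.esrc f) x) =
      Lam.comp (ι (E.erng f) (pe f x)) (edge ⟨f, (Λv (E.esrc f)).src x⟩)
section FinAux

variable {k : ℕ}

theorem snoc_le_snoc_iff {a c : Fin k → ℕ} {b d : ℕ} :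
    (Fin.snoc a b : Fin (k+1) → ℕ) ≤ Fin.snoc c d ↔ a ≤ c ∧ b ≤ d := by
  constructor
  · intro h
    refine ⟨fun j => by simpa using h j.castSucc, by simpa using h (Fin.last k)⟩
  · rintro ⟨h1, h2⟩ i
    refine Fin.lastCases ?_ ?_ i <;> simp [h2]
    exact fun j => h1 j

theorem snoc_add_snoc (a c : Fin k → ℕ) (b d : ℕ) :
    (Fin.snoc a b : Fin (k+1) → ℕ) + Fin.snoc c d = Fin.snoc (a + c) (b + d) := by
  funext i
  refine Fin.lastCases ?_ ?_ i <;> simp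

theorem single_castSucc_eq (j : Fin k) :
    (Pi.single (Fin.castSucc j) 1 : Fin (k+1) → ℕ) =
      (Fin.snoc (Pi.single j 1) 0 : Fin (k+1) → ℕ) := by
  funext i
  refine Fin.lastCases ?_ ?_ i
  · simp [Pi.single_apply, (Fin.castSucc_lt_last j).ne]
  · intro i; simp [Pi.single_apply, Fin.castSucc_inj]

theorem single_last_eq :
    (Pi.single (Fin.last k) 1 : Fin (k+1) → ℕ) =
      (Fin.snoc (fun _ : Fin k => 0) 1 : Fin (k+1) → ℕ) := by
  funext i
  refine Fin.lastCases ?_ ?_ i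
  · simp
  · intro i; simp [Pi.single_apply, (Fin.castSucc_lt_last i).ne']

theorem single_last_add_snoc (a : Fin k → ℕ) (b : ℕ) :
    (Pi.single (Fin.last k) 1 : Fin (k+1) → ℕ) + Fin.snoc a b = Fin.snoc a (b + 1) := by
  funext i
  refine Fin.lastCases ?_ ?_ i
  · simp [Nat.add_comm]
  · intro i; simp [Pi.single_apply, (Fin.castSucc_lt_last i).ne']

theorem snoc_inj {a c : Fin k → ℕ} {b d : ℕ}
    (h : (Fin.snoc a b : Fin (k+1) → ℕ) = Fin.snoc c d) : a = c ∧ b = d := by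
  constructor
  · funext j
    have := congrFun h j.castSucc
    simpa using this
  · simpa using congrFun h (Fin.last k)

end FinAux

namespace KGraph

variable {k : ℕ} (Λ : KGraph k)

theorem src_eq_self {v : Λ.M} (hv : Λ.IsVertex v) : Λ.src v = v := by
  rw [← hv, Λ.src_rng, hv]

theorem deg_vertex {v : Λ.M} (hv : Λ.IsVertex v) : Λ.deg v = 0 := by
  rw [← hv, Λ.deg_rng]

theorem leSet_finite (hrf : Λ.RowFinite) {u : Λ.M} (hu : Λ.IsVertex u) (m : Fin k → ℕ) :
    (Λ.leSet u m).Finite := by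
  have hsub : Λ.leSet u m ⊆ ⋃ n ∈ Set.Iic m, {x | Λ.rng x = u ∧ Λ.deg x = n} := by
    rintro x ⟨h1, h2, -⟩
    exact Set.mem_biUnion h2 ⟨h1, rfl⟩
  exact ((Set.finite_Iic m).biUnion fun n _ => hrf u n hu).subset hsub

end KGraph

namespace BCSLimit

variable {k : ℕ} {E : BratteliDiagram} {Λv : E.V → KGraph k}
  {pe : ∀ f : E.Edge, (Λv (E.esrc f)).M → (Λv (E.erng f)).M}
  (L : BCSLimit E Λv pe)

/-- The set of vertical (degree `e_{k+1}`) edges with range `V`. -/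
def vertEdges (V : L.Lam.M) : Set L.Lam.M :=
  {z | L.Lam.rng z = V ∧ L.Lam.deg z = Pi.single (Fin.last k) 1}

theorem isVertex_iota {v : E.V} {u : (Λv v).M} (hu : (Λv v).IsVertex u) :
    L.Lam.IsVertex (L.ι v u) := by
  unfold KGraph.IsVertex
  rw [L.ι_rng, hu]

theorem vertex_struct {V : L.Lam.M} (hV : L.Lam.IsVertex V) :
    ∃ v u, (Λv v).IsVertex u ∧ V = L.ι v u := by
  have hd : L.Lam.deg V = 0 := L.Lam.deg_vertex hV
  obtain ⟨v, x, rfl⟩ := L.ι_union V (by rw [hd]; rfl)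
  refine ⟨v, x, ?_, rfl⟩
  have hV' := hV
  unfold KGraph.IsVertex at hV'
  rw [L.ι_rng] at hV'
  exact L.ι_inj v hV'

theorem exists_vertEdge
    (hcov : ∀ f, KGraph.IsKGraphCovering (Λv (E.esrc f)) (Λv (E.erng f)) (pe f))
    (v : E.V) {u : (Λv v).M} (hu : (Λv v).IsVertex u) :
    ∃ z, z ∈ L.vertEdges (L.ι v u) := by
  obtain ⟨f, hf⟩ := E.rcv v
  subst hf
  obtain ⟨x, hx⟩ := (hcov f).1 u
  have hsv : (Λv (E.esrc f)).IsVertex ((Λv (E.esrc f)).src x) := (Λv _).isVertex_src x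
  refine ⟨L.edge ⟨f, (Λv (E.esrc f)).src x⟩, ?_, ?_⟩
  · rw [L.edge_rng f _ hsv, ← (hcov f).2.1, hx, (Λv _).src_eq_self hu]
  · rw [L.edge_deg ⟨f, _⟩ hsv, single_last_eq]

theorem deg_last_of_mem_leSet
    (hcov : ∀ f, KGraph.IsKGraphCovering (Λv (E.esrc f)) (Λv (E.erng f)) (pe f))
    {V : L.Lam.M} {m : Fin k → ℕ} {l : ℕ} {x : L.Lam.M}
    (hx : x ∈ L.Lam.leSet V (Fin.snoc m l)) : L.Lam.deg x (Fin.last k) = l := by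
  obtain ⟨hr, hle, hmax⟩ := hx
  have h1 : L.Lam.deg x (Fin.last k) ≤ l := by simpa using hle (Fin.last k)
  by_contra hne
  have hlt : L.Lam.deg x (Fin.last k) < l := lt_of_le_of_ne h1 hne
  obtain ⟨w, u', hu', hw⟩ := L.vertex_struct (L.Lam.isVertex_src x)
  obtain ⟨z, hz1, hz2⟩ := L.exists_vertEdge hcov w hu'
  refine hmax (Fin.last k) ?_ ⟨z, by rw [hz1, hw], hz2⟩
  intro i
  refine Fin.lastCases ?_ ?_ i
  · simpa using hlt
  · intro j
    have := hle j.castSucc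
    simpa [Pi.single_apply, (Fin.castSucc_lt_last j).ne'] using this

end BCSLimit

namespace BCSLimit

variable {k : ℕ} {E : BratteliDiagram} {Λv : E.V → KGraph k}
  {pe : ∀ f : E.Edge, (Λv (E.esrc f)).M → (Λv (E.erng f)).M}
  (L : BCSLimit E Λv pe)

theorem edges_finite (hsc : E.SinglyConnected) (v : E.V) : {f | E.erng f = v}.Finite := by
  have himg : (E.esrc '' {f | E.erng f = v}) ⊆ {w | E.level w = E.level v + 1} := by
    rintro _ ⟨f, hf, rfl⟩
    simp only [Set.mem_setOf_eq] at hf ⊢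
    rw [E.level_src, hf]
  exact Set.Finite.of_finite_image ((E.level_finite _).subset himg)
    (fun f hf f' hf' h => hsc f f' (hf.trans hf'.symm) h)

theorem fiber_finite
    (hcov : ∀ f, KGraph.IsKGraphCovering (Λv (E.esrc f)) (Λv (E.erng f)) (pe f))
    (hfin : ∀ (f : E.Edge) (u : (Λv (E.erng f)).M), (Λv (E.erng f)).IsVertex u →
      {x | pe f x = u}.Finite)
    (f : E.Edge) (v : E.V) (u : (Λv v).M) :
    {x : (Λv (E.esrc f)).Vtx | L.ι (E.erng f) (pe f x.1) = L.ι v u}.Finite := by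
  by_cases hne : {x : (Λv (E.esrc f)).Vtx | L.ι (E.erng f) (pe f x.1) = L.ι v u}.Nonempty
  · obtain ⟨x0, hx0⟩ := hne
    have hvert : (Λv (E.erng f)).IsVertex (pe f x0.1) := by
      unfold KGraph.IsVertex
      rw [(hcov f).2.2.1, x0.2]
    have hsub : {x : (Λv (E.esrc f)).Vtx | L.ι (E.erng f) (pe f x.1) = L.ι v u} ⊆
        Subtype.val ⁻¹' {x | pe f x = pe f x0.1} := by
      intro x hx
      simp only [Set.mem_setOf_eq] at hx hx0 ⊢
      exact L.ι_inj _ (hx.trans hx0.symm)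
    exact ((hfin f _ hvert).preimage (Subtype.val_injective.injOn)).subset hsub
  · rw [Set.not_nonempty_iff_eq_empty] at hne
    rw [hne]; exact Set.finite_empty

theorem vertEdges_eq (v : E.V) {u : (Λv v).M} (hu : (Λv v).IsVertex u) :
    L.vertEdges (L.ι v u) =
      ⋃ f ∈ {f | E.erng f = v},
        (fun x : (Λv (E.esrc f)).Vtx => L.edge ⟨f, x.1⟩) ''
          {x : (Λv (E.esrc f)).Vtx | L.ι (E.erng f) (pe f x.1) = L.ι v u} := by
  ext z
  simp only [Set.mem_iUnion, Set.mem_image, Set.mem_setOf_eq, exists_prop]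
  constructor
  · rintro ⟨hr, hd⟩
    obtain ⟨⟨f, w⟩, hq, rfl⟩ := L.edge_surj z (by rw [hd, single_last_eq])
    have hrng := (L.edge_rng f w hq).symm.trans hr
    exact ⟨f, L.ι_disjoint _ _ _ _ hrng, ⟨w, hq⟩, hrng, rfl⟩
  · rintro ⟨f, hf, x, hx, rfl⟩
    exact ⟨(L.edge_rng f x.1 x.2).trans hx, by rw [L.edge_deg ⟨f, x.1⟩ x.2, single_last_eq]⟩

theorem vertEdges_finite (hsc : E.SinglyConnected)
    (hcov : ∀ f, KGraph.IsKGraphCovering (Λv (E.esrc f)) (Λv (E.erng f)) (pe f))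
    (hfin : ∀ (f : E.Edge) (u : (Λv (E.erng f)).M), (Λv (E.erng f)).IsVertex u →
      {x | pe f x = u}.Finite)
    (v : E.V) {u : (Λv v).M} (hu : (Λv v).IsVertex u) :
    (L.vertEdges (L.ι v u)).Finite := by
  rw [L.vertEdges_eq v hu]
  exact (edges_finite (E := E) hsc v).biUnion fun f _ => (L.fiber_finite hcov hfin f v u).image _

theorem sum_vertEdges (hsc : E.SinglyConnected)
    (hcov : ∀ f, KGraph.IsKGraphCovering (Λv (E.esrc f)) (Λv (E.erng f)) (pe f))
    (hfin : ∀ (f : E.Edge) (u : (Λv (E.erng f)).M), (Λv (E.erng f)).IsVertex u →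
      {x | pe f x = u}.Finite)
    (gv : ∀ v, (Λv v).Vtx → NNReal) (g : L.Lam.Vtx → NNReal)
    (hg : ∀ (v) (u : (Λv v).Vtx) (x : L.Lam.Vtx), x.1 = L.ι v u.1 → g x = gv v u)
    (v : E.V) {u : (Λv v).M} (hu : (Λv v).IsVertex u) :
    ∑ᶠ z ∈ L.vertEdges (L.ι v u), g (L.Lam.srcV z) =
      ∑ᶠ f ∈ {f | E.erng f = v},
        ∑ᶠ x ∈ {x : (Λv (E.esrc f)).Vtx | L.ι (E.erng f) (pe f x.1) = L.ι v u},
          gv (E.esrc f) x := by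
  rw [L.vertEdges_eq v hu]
  rw [finsum_mem_biUnion ?_ (edges_finite (E := E) hsc v)
    (fun f _ => (L.fiber_finite hcov hfin f v u).image _)]
  · refine finsum_mem_congr rfl fun f hf => ?_
    rw [finsum_mem_image ?_]
    · refine finsum_mem_congr rfl fun x hx => ?_
      exact hg (E.esrc f) x _ (L.edge_src f x.1 x.2)
    · intro x hx y hy h
      have h2 := L.edge_injOn x.2 y.2 h
      obtain ⟨-, h3⟩ := Sigma.mk.inj_iff.mp h2
      exact Subtype.ext (eq_of_heq h3)
  · intro f hf f' hf' hne
    simp only [Function.onFun]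
    rw [Set.disjoint_left]
    rintro z ⟨x, hx, rfl⟩ ⟨x', hx', heq⟩
    have := L.edge_injOn x'.2 x.2 heq
    exact hne (congrArg Sigma.fst this).symm

end BCSLimit

namespace BCSLimit

variable {k : ℕ} {E : BratteliDiagram} {Λv : E.V → KGraph k}
  {pe : ∀ f : E.Edge, (Λv (E.esrc f)).M → (Λv (E.erng f)).M}
  (L : BCSLimit E Λv pe)

theorem leSet_snoc_zero (v : E.V) {u : (Λv v).M} (hu : (Λv v).IsVertex u) (m : Fin k → ℕ) :
    L.Lam.leSet (L.ι v u) (Fin.snoc m 0) = L.ι v '' (Λv v).leSet u m := by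
  ext lam
  constructor
  · rintro ⟨hr, hle, hmax⟩
    have hlast : L.Lam.deg lam (Fin.last k) = 0 :=
      Nat.le_zero.mp (by simpa using hle (Fin.last k))
    obtain ⟨w, α, rfl⟩ := L.ι_union lam hlast
    rw [L.ι_rng] at hr
    obtain rfl : v = w := (L.ι_disjoint _ _ _ _ hr).symm
    have hrα : (Λv v).rng α = u := L.ι_inj v hr
    have hdegle : (Λv v).deg α ≤ m := by
      intro j
      have h := hle j.castSucc
      rw [L.ι_deg] at h
      simpa using h
    refine ⟨α, ⟨hrα, hdegle, ?_⟩, rfl⟩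
    rintro j hj ⟨β, hβr, hβd⟩
    refine hmax j.castSucc ?_ ⟨L.ι v β, ?_, ?_⟩
    · rw [L.ι_deg, single_castSucc_eq, snoc_add_snoc]
      exact snoc_le_snoc_iff.mpr ⟨hj, le_rfl⟩
    · rw [L.ι_rng, hβr, ← L.ι_src]
    · rw [L.ι_deg, hβd, single_castSucc_eq]
  · rintro ⟨α, ⟨hrα, hle, hmax⟩, rfl⟩
    refine ⟨by rw [L.ι_rng, hrα], ?_, ?_⟩
    · rw [L.ι_deg]
      exact snoc_le_snoc_iff.mpr ⟨hle, le_rfl⟩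
    · intro i
      refine Fin.lastCases ?_ (fun j => ?_) i
      · intro hi
        have h := hi (Fin.last k)
        rw [L.ι_deg] at h
        simp at h
      · rintro hi ⟨y, hy1, hy2⟩
        have hylast : L.Lam.deg y (Fin.last k) = 0 := by
          rw [hy2, single_castSucc_eq]; simp
        obtain ⟨w, β, rfl⟩ := L.ι_union y hylast
        rw [L.ι_rng, L.ι_src] at hy1
        obtain rfl : v = w := (L.ι_disjoint _ _ _ _ hy1).symm
        have hrβ : (Λv v).rng β = (Λv v).src α := L.ι_inj v hy1
        have hdβ : (Λv v).deg β = Pi.single j 1 := by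
          rw [L.ι_deg, single_castSucc_eq] at hy2
          exact (snoc_inj hy2).1
        refine hmax j ?_ ⟨β, hrβ, hdβ⟩
        intro j'
        have h := hi j'.castSucc
        rw [L.ι_deg, single_castSucc_eq, snoc_add_snoc] at h
        simpa using h

theorem mem_leSet_comp
    (hcov : ∀ f, KGraph.IsKGraphCovering (Λv (E.esrc f)) (Λv (E.erng f)) (pe f))
    {V : L.Lam.M} (m : Fin k → ℕ) (l : ℕ)
    {z x : L.Lam.M} (hz : z ∈ L.vertEdges V)
    (hx : x ∈ L.Lam.leSet (L.Lam.src z) (Fin.snoc m l)) :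
    L.Lam.comp z x ∈ L.Lam.leSet V (Fin.snoc m (l + 1)) := by
  obtain ⟨hzr, hzd⟩ := hz
  obtain ⟨hxr, hxle, hxmax⟩ := hx
  have hc : L.Lam.Composable z x := hxr.symm
  have hxlast : L.Lam.deg x (Fin.last k) = l :=
    L.deg_last_of_mem_leSet hcov ⟨hxr, hxle, hxmax⟩
  have hdeg : L.Lam.deg (L.Lam.comp z x) =
      Fin.snoc (Fin.init (L.Lam.deg x)) (l + 1) := by
    rw [L.Lam.deg_comp z x hc, hzd, ← Fin.snoc_init_self (L.Lam.deg x), hxlast,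
      single_last_add_snoc]
    simp [Fin.init_snoc]
  have hsrc : L.Lam.src (L.Lam.comp z x) = L.Lam.src x := L.Lam.src_comp z x hc
  refine ⟨by rw [L.Lam.rng_comp z x hc, hzr], ?_, ?_⟩
  · rw [hdeg]
    refine snoc_le_snoc_iff.mpr ⟨fun j => ?_, le_rfl⟩
    have h := hxle j.castSucc
    simpa [Fin.init] using h
  · intro i
    refine Fin.lastCases ?_ (fun j => ?_) i
    · intro hi
      have h := hi (Fin.last k)
      rw [hdeg] at h
      simp at h
    · rintro hi ⟨y, hy1, hy2⟩
      refine hxmax j.castSucc ?_ ⟨y, by rw [hy1, hsrc], hy2⟩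
      intro i'
      refine Fin.lastCases ?_ (fun j' => ?_) i'
      · rw [← hxlast]
        simp [Pi.single_apply, (Fin.castSucc_lt_last j).ne]
      · have h := hi j'.castSucc
        rw [hdeg] at h
        simpa [Fin.init] using h

theorem leSet_snoc_succ
    (hcov : ∀ f, KGraph.IsKGraphCovering (Λv (E.esrc f)) (Λv (E.erng f)) (pe f))
    {V : L.Lam.M} (hV : L.Lam.IsVertex V) (m : Fin k → ℕ) (l : ℕ) :
    L.Lam.leSet V (Fin.snoc m (l + 1)) =
      ⋃ z ∈ L.vertEdges V,
        L.Lam.comp z '' L.Lam.leSet (L.Lam.src z) (Fin.snoc m l) := by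
  ext lam
  simp only [Set.mem_iUnion, Set.mem_image, exists_prop]
  constructor
  · intro hlam
    obtain ⟨hr, hle, hmax⟩ := hlam
    have hlast : L.Lam.deg lam (Fin.last k) = l + 1 :=
      L.deg_last_of_mem_leSet hcov ⟨hr, hle, hmax⟩
    have hdeg : L.Lam.deg lam =
        Pi.single (Fin.last k) 1 + Fin.snoc (Fin.init (L.Lam.deg lam)) l := by
      rw [single_last_add_snoc, ← hlast, Fin.snoc_init_self]
    obtain ⟨⟨z, x⟩, ⟨hc, hcomp, hdz, hdx⟩, -⟩ :=
      L.Lam.factor lam (Pi.single (Fin.last k) 1) (Fin.snoc (Fin.init (L.Lam.deg lam)) l) hdeg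
    have hsrc : L.Lam.src lam = L.Lam.src x := by
      rw [← hcomp, L.Lam.src_comp z x hc]
    have hzmem : z ∈ L.vertEdges V := by
      refine ⟨?_, hdz⟩
      rw [← hr, ← hcomp, L.Lam.rng_comp z x hc]
    refine ⟨z, hzmem, x, ⟨hc.symm, ?_, ?_⟩, hcomp⟩
    · rw [hdx]
      refine snoc_le_snoc_iff.mpr ⟨fun j => ?_, le_rfl⟩
      have h := hle j.castSucc
      simpa [Fin.init] using h
    · intro i
      refine Fin.lastCases ?_ (fun j => ?_) i
      · intro hi
        have h := hi (Fin.last k)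
        rw [hdx] at h
        simp at h
      · rintro hi ⟨y, hy1, hy2⟩
        refine hmax j.castSucc ?_ ⟨y, by rw [hy1, hsrc], hy2⟩
        intro i'
        refine Fin.lastCases ?_ (fun j' => ?_) i'
        · rw [← hlast]
          simp [Pi.single_apply, (Fin.castSucc_lt_last j).ne]
        · have h := hi j'.castSucc
          rw [hdx] at h
          have h2 : Fin.init (L.Lam.deg lam) j' = L.Lam.deg lam j'.castSucc := rfl
          simpa [Fin.init] using h
  · rintro ⟨z, hz, x, hx, rfl⟩
    exact L.mem_leSet_comp hcov m l hz hx

theorem comp_inj {V : L.Lam.M} (m : Fin k → ℕ) (l : ℕ)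
    {z z' x x' : L.Lam.M} (hz : z ∈ L.vertEdges V) (hz' : z' ∈ L.vertEdges V)
    (hx : x ∈ L.Lam.leSet (L.Lam.src z) (Fin.snoc m l))
    (hx' : x' ∈ L.Lam.leSet (L.Lam.src z') (Fin.snoc m l))
    (h : L.Lam.comp z x = L.Lam.comp z' x') : z = z' ∧ x = x' := by
  have hc : L.Lam.Composable z x := hx.1.symm
  have hc' : L.Lam.Composable z' x' := hx'.1.symm
  have hdx : L.Lam.deg x = L.Lam.deg x' := by
    have hh : L.Lam.deg z + L.Lam.deg x = L.Lam.deg z' + L.Lam.deg x' := by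
      rw [← L.Lam.deg_comp z x hc, ← L.Lam.deg_comp z' x' hc', h]
    rw [hz.2, hz'.2] at hh
    exact add_left_cancel hh
  obtain ⟨p, hp, huniq⟩ := L.Lam.factor (L.Lam.comp z x) (Pi.single (Fin.last k) 1)
    (L.Lam.deg x) (by rw [L.Lam.deg_comp z x hc, hz.2])
  have h1 := huniq (z, x) ⟨hc, rfl, hz.2, rfl⟩
  have h2 := huniq (z', x') ⟨hc', h.symm, hz'.2, hdx.symm⟩
  have h3 := h1.trans h2.symm
  exact ⟨congrArg Prod.fst h3, congrArg Prod.snd h3⟩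

end BCSLimit

namespace BCSLimit

variable {k : ℕ} {E : BratteliDiagram} {Λv : E.V → KGraph k}
  {pe : ∀ f : E.Edge, (Λv (E.esrc f)).M → (Λv (E.erng f)).M}
  (L : BCSLimit E Λv pe)

theorem leSet_iota_finite (hsc : E.SinglyConnected)
    (hcov : ∀ f, KGraph.IsKGraphCovering (Λv (E.esrc f)) (Λv (E.erng f)) (pe f))
    (hfin : ∀ (f : E.Edge) (u : (Λv (E.erng f)).M), (Λv (E.erng f)).IsVertex u →
      {x | pe f x = u}.Finite)
    (hrf : ∀ v, (Λv v).RowFinite) :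
    ∀ (l : ℕ) (m : Fin k → ℕ) (v : E.V) (u : (Λv v).M), (Λv v).IsVertex u →
      (L.Lam.leSet (L.ι v u) (Fin.snoc m l)).Finite := by
  intro l
  induction l with
  | zero =>
    intro m v u hu
    rw [L.leSet_snoc_zero v hu m]
    exact ((Λv v).leSet_finite (hrf v) hu m).image _
  | succ l ih =>
    intro m v u hu
    rw [L.leSet_snoc_succ hcov (L.isVertex_iota hu) m l]
    refine (L.vertEdges_finite hsc hcov hfin v hu).biUnion fun z hz => ?_
    obtain ⟨w, u', hu', hw⟩ := L.vertex_struct (L.Lam.isVertex_src z)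
    rw [hw]
    exact (ih m w u' hu').image _

theorem leSet_single
    (hcov : ∀ f, KGraph.IsKGraphCovering (Λv (E.esrc f)) (Λv (E.erng f)) (pe f))
    (v : E.V) {u : (Λv v).M} (hu : (Λv v).IsVertex u) :
    L.Lam.leSet (L.ι v u) (Pi.single (Fin.last k) 1) = L.vertEdges (L.ι v u) := by
  have hsn : (Pi.single (Fin.last k) 1 : Fin (k+1) → ℕ) =
      (Fin.snoc (fun _ : Fin k => 0) 1 : Fin (k+1) → ℕ) := single_last_eq
  ext lam
  constructor
  · intro hlam
    obtain ⟨hr, hle, hmax⟩ := hlam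
    rw [hsn] at hle
    have hlast : L.Lam.deg lam (Fin.last k) = 1 := by
      refine L.deg_last_of_mem_leSet (m := fun _ => 0) (l := 1) hcov ⟨hr, hle, ?_⟩
      rw [← hsn]; exact hmax
    refine ⟨hr, ?_⟩
    funext i
    refine Fin.lastCases ?_ (fun j => ?_) i
    · rw [hlast]; simp
    · have h := hle j.castSucc
      simp only [Fin.snoc_castSucc] at h
      simp [Pi.single_apply, (Fin.castSucc_lt_last j).ne', Nat.le_zero.mp h]
  · rintro ⟨hr, hd⟩
    refine ⟨hr, le_of_eq hd, ?_⟩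
    intro i hi
    exfalso
    have h := hi i
    rw [hd] at h
    simp only [Pi.add_apply, Pi.single_eq_same] at h
    exact Nat.not_succ_le_self _ h

theorem trace_aux (hsc : E.SinglyConnected)
    (hcov : ∀ f, KGraph.IsKGraphCovering (Λv (E.esrc f)) (Λv (E.erng f)) (pe f))
    (hfin : ∀ (f : E.Edge) (u : (Λv (E.erng f)).M), (Λv (E.erng f)).IsVertex u →
      {x | pe f x = u}.Finite)
    (hrf : ∀ v, (Λv v).RowFinite)
    (gv : ∀ v, (Λv v).Vtx → NNReal) (hgv : ∀ v, (Λv v).IsGraphTrace (gv v))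
    (g : L.Lam.Vtx → NNReal)
    (hg : ∀ (v) (u : (Λv v).Vtx) (x : L.Lam.Vtx), x.1 = L.ι v u.1 → g x = gv v u)
    (hsum : ∀ (v : E.V) (u : (Λv v).M) (hu : (Λv v).IsVertex u),
      ∑ᶠ z ∈ L.vertEdges (L.ι v u), g (L.Lam.srcV z) = g ⟨L.ι v u, L.isVertex_iota hu⟩) :
    ∀ (l : ℕ) (m : Fin k → ℕ) (v : E.V) (u : (Λv v).M) (hu : (Λv v).IsVertex u),
      g ⟨L.ι v u, L.isVertex_iota hu⟩ =
        ∑ᶠ x ∈ L.Lam.leSet (L.ι v u) (Fin.snoc m l), g (L.Lam.srcV x) := by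
  intro l
  induction l with
  | zero =>
    intro m v u hu
    rw [L.leSet_snoc_zero v hu m, finsum_mem_image ((L.ι_inj v).injOn)]
    have hcong : ∀ α ∈ (Λv v).leSet u m,
        g (L.Lam.srcV (L.ι v α)) = gv v ((Λv v).srcV α) := by
      intro α hα
      exact hg v ((Λv v).srcV α) _ (L.ι_src v α)
    rw [finsum_mem_congr rfl hcong]
    rw [hg v ⟨u, hu⟩ ⟨L.ι v u, L.isVertex_iota hu⟩ rfl]
    exact hgv v ⟨u, hu⟩ m
  | succ l ih =>
    intro m v u hu
    rw [L.leSet_snoc_succ hcov (L.isVertex_iota hu) m l]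
    rw [finsum_mem_biUnion ?_ (L.vertEdges_finite hsc hcov hfin v hu) ?_]
    · have hcong : ∀ z ∈ L.vertEdges (L.ι v u),
          (∑ᶠ x ∈ L.Lam.comp z '' L.Lam.leSet (L.Lam.src z) (Fin.snoc m l),
            g (L.Lam.srcV x)) = g (L.Lam.srcV z) := by
        intro z hz
        rw [finsum_mem_image ?_]
        · have hcong2 : ∀ x ∈ L.Lam.leSet (L.Lam.src z) (Fin.snoc m l),
              g (L.Lam.srcV (L.Lam.comp z x)) = g (L.Lam.srcV x) := by
            intro x hx
            congr 1
            exact Subtype.ext (L.Lam.src_comp z x hx.1.symm)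
          rw [finsum_mem_congr rfl hcong2]
          obtain ⟨w, u', hu', hw⟩ := L.vertex_struct (L.Lam.isVertex_src z)
          have hsrcV : L.Lam.srcV z = ⟨L.ι w u', L.isVertex_iota hu'⟩ :=
            Subtype.ext hw
          rw [hsrcV, hw]
          exact (ih m w u' hu').symm
        · intro x hx y hy h
          exact (L.comp_inj m l hz hz hx hy h).2
      rw [finsum_mem_congr rfl hcong]
      exact (hsum v u hu).symm
    · intro z hz z' hz' hne
      simp only [Function.onFun]
      rw [Set.disjoint_left]
      rintro lam ⟨x, hx, rfl⟩ ⟨x', hx', heq⟩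
      exact hne ((L.comp_inj m l hz' hz hx' hx heq).1).symm
    · intro z hz
      obtain ⟨w, u', hu', hw⟩ := L.vertex_struct (L.Lam.isVertex_src z)
      rw [hw]
      exact (L.leSet_iota_finite hsc hcov hfin hrf l m w u' hu').image _

end BCSLimit

open KGraph in
/-- For the `(k+1)`-graph `Λ_E` of a Bratteli diagram of finite
covering maps between row-finite locally convex `k`-graphs, a family of graph traces
`g_v` on the `Λ_v` assembles (via `g ∘ ι_v = g_v`) to a graph trace on `Λ_E` if and
only if the family is compatible. -/
theorem graphTrace_of_bratteli_iff_compatible {k : ℕ}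
    (E : BratteliDiagram) (hsc : E.SinglyConnected)
    (Λv : E.V → KGraph k)
    (pe : ∀ f : E.Edge, (Λv (E.esrc f)).M → (Λv (E.erng f)).M)
    (hcov : ∀ f, IsKGraphCovering (Λv (E.esrc f)) (Λv (E.erng f)) (pe f))
    (hfin : ∀ (f : E.Edge) (u : (Λv (E.erng f)).M), (Λv (E.erng f)).IsVertex u →
      {x | pe f x = u}.Finite)
    (hrf : ∀ v, (Λv v).RowFinite) (hlc : ∀ v, (Λv v).LocallyConvex)
    (L : BCSLimit E Λv pe)
    (gv : ∀ v, (Λv v).Vtx → ℝ≥0) (hgv : ∀ v, (Λv v).IsGraphTrace (gv v))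
    (g : L.Lam.Vtx → ℝ≥0)
    (hg : ∀ (v) (u : (Λv v).Vtx) (x : L.Lam.Vtx), x.1 = L.ι v u.1 → g x = gv v u) :
    L.Lam.IsGraphTrace g ↔
      ∀ (v) (u : (Λv v).Vtx),
        gv v u = ∑ᶠ f ∈ {f | E.erng f = v},
          ∑ᶠ x ∈ {x : (Λv (E.esrc f)).Vtx |
              L.ι (E.erng f) (pe f x.1) = L.ι v u.1},
            gv (E.esrc f) x := by
  constructor
  · intro htrace v u
    have hV := L.isVertex_iota (v := v) u.2
    calc gv v u = g ⟨L.ι v u.1, hV⟩ := (hg v u _ rfl).symm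
      _ = ∑ᶠ x ∈ L.Lam.leSet (L.ι v u.1) (Pi.single (Fin.last k) 1), g (L.Lam.srcV x) :=
        htrace ⟨L.ι v u.1, hV⟩ (Pi.single (Fin.last k) 1)
      _ = ∑ᶠ z ∈ L.vertEdges (L.ι v u.1), g (L.Lam.srcV z) := by
        rw [L.leSet_single hcov v u.2]
      _ = _ := L.sum_vertEdges hsc hcov hfin gv g hg v u.2
  · intro hcompat V n
    obtain ⟨v, u, hu, hVeq⟩ := L.vertex_struct V.2
    have hVsub : V = ⟨L.ι v u, L.isVertex_iota hu⟩ := Subtype.ext hVeq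
    have hsum : ∀ (v : E.V) (u : (Λv v).M) (hu : (Λv v).IsVertex u),
        ∑ᶠ z ∈ L.vertEdges (L.ι v u), g (L.Lam.srcV z) =
          g ⟨L.ι v u, L.isVertex_iota hu⟩ := by
      intro v u hu
      rw [L.sum_vertEdges hsc hcov hfin gv g hg v hu, hg v ⟨u, hu⟩ ⟨L.ι v u, L.isVertex_iota hu⟩ rfl]
      exact (hcompat v ⟨u, hu⟩).symm
    rw [hVsub]
    have hmain := L.trace_aux hsc hcov hfin hrf gv hgv g hg hsum
      (n (Fin.last k)) (Fin.init n) v u hu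
    rw [Fin.snoc_init_self n] at hmain
    exact hmain
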